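/- arXiv:1310.7649 — 6 statements merged into one kernel-verified Lean document; each statement's English description precedes it below -/
import Mathlib

section
/- For fixed τ > 0 and 0 < ε < ħω_D, the function τ ↦ ∫_ε^{ħω_D} (1/ξ) tanh(ξ/(2τ)) dξ is strictly decreasing on (0, ∞). -/
lemma tanh_strictMono' {a b : ℝ} (h : a < b) : Real.tanh a < Real.tanh b := by
  rw [Real.tanh_eq_sinh_div_cosh, Real.tanh_eq_sinh_div_cosh,
    div_lt_div_iff₀ (Real.cosh_pos _) (Real.cosh_pos _)]
  have hs : 0 < Real.sinh (b - a) := Real.sinh_pos_iff.2 (sub_pos.2 h)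
  rw [Real.sinh_sub] at hs
  nlinarith

lemma cont_integrand (ε ω τ : ℝ) (hε : 0 < ε) (hεω : ε < ω) (hτ : 0 < τ) :
    IntervalIntegrable (fun ξ : ℝ => (1 / ξ) * Real.tanh (ξ / (2 * τ))) MeasureTheory.volume ε ω := by
  apply ContinuousOn.intervalIntegrable
  apply ContinuousOn.mul
  · exact continuousOn_const.div continuousOn_id fun x hx => by
      rcases Set.mem_uIcc.1 hx with ⟨h1, _⟩ | ⟨h1, _⟩ <;> nlinarith [hε, hεω]
  · have hct : Continuous Real.tanh := by
      have : Real.tanh = fun x => Real.sinh x / Real.cosh x := by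
        funext x; exact Real.tanh_eq_sinh_div_cosh x
      rw [this]
      exact Real.continuous_sinh.div Real.continuous_cosh fun x => (Real.cosh_pos x).ne'
    exact (hct.comp (continuous_id.div_const _)).continuousOn

/-- The function τ ↦ ∫_ε^{ħω_D} (1/ξ) tanh(ξ/(2τ)) dξ is strictly decreasing on (0, ∞). -/
theorem stmt1 (ε ω : ℝ) (hε : 0 < ε) (hεω : ε < ω) :
    StrictAntiOn (fun τ : ℝ => ∫ ξ in ε..ω, (1 / ξ) * Real.tanh (ξ / (2 * τ)))
      (Set.Ioi 0) := by
  intro τ₁ h₁ τ₂ h₂ h12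
  simp only [Set.mem_Ioi] at h₁ h₂
  have hi1 := cont_integrand ε ω τ₁ hε hεω h₁
  have hi2 := cont_integrand ε ω τ₂ hε hεω h₂
  have key : (0:ℝ) < ∫ ξ in ε..ω, ((1 / ξ) * Real.tanh (ξ / (2 * τ₁))
      - (1 / ξ) * Real.tanh (ξ / (2 * τ₂))) := by
    apply intervalIntegral.intervalIntegral_pos_of_pos_on (hi1.sub hi2) _ hεω
    intro x hx
    have hx0 : 0 < x := lt_trans hε hx.1
    have hlt : x / (2 * τ₂) < x / (2 * τ₁) :=
      div_lt_div_of_pos_left hx0 (by linarith) (by linarith)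
    have := tanh_strictMono' hlt
    have h1x : 0 < 1 / x := by positivity
    nlinarith
  rw [intervalIntegral.integral_sub hi1 hi2] at key
  simpa using key
end

section
/- The function F(T, Y) = ∫_ε^{ħω_D} (1/√(ξ² + Y)) tanh(√(ξ² + Y)/(2T)) dξ is strictly decreasing in Y ≥ 0 for each fixed T > 0. -/
open Real Set

lemma tanh_hasDerivAt (x : ℝ) : HasDerivAt Real.tanh (1 / Real.cosh x ^ 2) x := by
  have h : HasDerivAt (fun y => Real.sinh y / Real.cosh y)
      ((Real.cosh x * Real.cosh x - Real.sinh x * Real.sinh x) / Real.cosh x ^ 2) x :=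
    (Real.hasDerivAt_sinh x).div (Real.hasDerivAt_cosh x) (Real.cosh_pos x).ne'
  have heq : (Real.cosh x * Real.cosh x - Real.sinh x * Real.sinh x) / Real.cosh x ^ 2
      = 1 / Real.cosh x ^ 2 := by
    rw [show Real.cosh x * Real.cosh x - Real.sinh x * Real.sinh x
        = Real.cosh x ^ 2 - Real.sinh x ^ 2 by ring, Real.cosh_sq_sub_sinh_sq]
  rw [heq] at h
  exact h.congr_of_eventuallyEq (Filter.Eventually.of_forall fun y =>
    (Real.tanh_eq_sinh_div_cosh y))

lemma continuous_tanh' : Continuous Real.tanh :=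
  (Differentiable.continuous fun x => (tanh_hasDerivAt x).differentiableAt)

lemma tanh_strictConcaveOn : StrictConcaveOn ℝ (Set.Ici (0:ℝ)) Real.tanh := by
  apply StrictAntiOn.strictConcaveOn_of_deriv (convex_Ici 0) continuous_tanh'.continuousOn
  have hd : deriv Real.tanh = fun x => 1 / Real.cosh x ^ 2 :=
    funext fun x => (tanh_hasDerivAt x).deriv
  rw [interior_Ici, hd]
  intro a ha b hb hab
  have hca : 0 < Real.cosh a := Real.cosh_pos a
  have h1 : Real.cosh a < Real.cosh b := by
    rw [Real.cosh_lt_cosh, abs_of_pos ha, abs_of_pos (lt_trans ha hab)]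
    exact hab
  have h2 : Real.cosh a ^ 2 < Real.cosh b ^ 2 := by
    apply pow_lt_pow_left₀ h1 hca.le
    norm_num
  exact one_div_lt_one_div_of_lt (by positivity) h2

lemma tanh_div_lt {a b : ℝ} (ha : 0 < a) (hab : a < b) :
    Real.tanh b / b < Real.tanh a / a := by
  have hb : 0 < b := ha.trans hab
  have key : (a / b) • Real.tanh b + (1 - a / b) • Real.tanh 0
      < Real.tanh ((a / b) • b + (1 - a / b) • (0:ℝ)) := by
    apply tanh_strictConcaveOn.2 (mem_Ici.2 hb.le) (mem_Ici.2 le_rfl) hb.ne'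
      (by positivity) (by rw [sub_pos]; exact (div_lt_one hb).2 hab) (by ring)
  simp only [smul_eq_mul, Real.tanh_zero, mul_zero, add_zero] at key
  rw [div_mul_cancel₀ _ hb.ne'] at key
  rw [div_lt_div_iff₀ hb ha]
  calc Real.tanh b * a = a / b * Real.tanh b * b := by field_simp
    _ < Real.tanh a * b := mul_lt_mul_of_pos_right key hb

lemma tanh_ratio_anti {T s₁ s₂ : ℝ} (hT : 0 < T) (hs₁ : 0 < s₁) (h : s₁ < s₂) :
    Real.tanh (s₂ / (2 * T)) / s₂ < Real.tanh (s₁ / (2 * T)) / s₁ := by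
  have hc : (0:ℝ) < 2 * T := by positivity
  have hu₁ : 0 < s₁ / (2 * T) := by positivity
  have hu : s₁ / (2 * T) < s₂ / (2 * T) := by gcongr
  have key := tanh_div_lt hu₁ hu
  have key2 : Real.tanh (s₂ / (2 * T)) / (s₂ / (2 * T)) / (2 * T)
      < Real.tanh (s₁ / (2 * T)) / (s₁ / (2 * T)) / (2 * T) := by gcongr
  have heq : ∀ s : ℝ, s ≠ 0 →
      Real.tanh (s / (2 * T)) / (s / (2 * T)) / (2 * T) = Real.tanh (s / (2 * T)) / s := by
    intro s hs
    rw [div_div, div_mul_cancel₀ _ hc.ne']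
  rwa [heq s₁ hs₁.ne', heq s₂ (hs₁.trans h).ne'] at key2

/-- F(T, Y) = ∫_ε^{ħω_D} (1/√(ξ² + Y)) tanh(√(ξ² + Y)/(2T)) dξ is strictly decreasing
in Y ≥ 0 for each fixed T > 0. -/
theorem stmt2 (ε ω : ℝ) (hε : 0 < ε) (hεω : ε < ω) (T : ℝ) (hT : 0 < T) :
    StrictAntiOn
      (fun Y : ℝ => ∫ ξ in ε..ω,
        (1 / Real.sqrt (ξ ^ 2 + Y)) * Real.tanh (Real.sqrt (ξ ^ 2 + Y) / (2 * T)))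
      (Set.Ici 0) := by
  intro Y₁ hY₁ Y₂ hY₂ h12
  simp only
  -- positivity of ξ² + Y on [ε, ω]
  have hpos : ∀ (Y : ℝ), 0 ≤ Y → ∀ x ∈ Icc ε ω, 0 < x ^ 2 + Y := by
    intro Y hY x hx
    have : 0 < x := lt_of_lt_of_le hε hx.1
    positivity
  have hcont : ∀ (Y : ℝ), 0 ≤ Y → ContinuousOn
      (fun ξ : ℝ => (1 / Real.sqrt (ξ ^ 2 + Y)) * Real.tanh (Real.sqrt (ξ ^ 2 + Y) / (2 * T)))
      (Icc ε ω) := by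
    intro Y hY
    have hs : ContinuousOn (fun ξ : ℝ => Real.sqrt (ξ ^ 2 + Y)) (Icc ε ω) :=
      (Real.continuous_sqrt.comp (by continuity)).continuousOn
    apply ContinuousOn.mul
    · apply ContinuousOn.div continuousOn_const hs
      intro x hx
      exact (Real.sqrt_pos.2 (hpos Y hY x hx)).ne'
    · exact continuous_tanh'.comp_continuousOn (hs.div_const _)
  have hle : ∀ x, x ∈ Icc ε ω →
      (1 / Real.sqrt (x ^ 2 + Y₂)) * Real.tanh (Real.sqrt (x ^ 2 + Y₂) / (2 * T))
      < (1 / Real.sqrt (x ^ 2 + Y₁)) * Real.tanh (Real.sqrt (x ^ 2 + Y₁) / (2 * T)) := by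
    intro x hx
    have h1 : 0 < x ^ 2 + Y₁ := hpos Y₁ hY₁ x hx
    have hs₁ : 0 < Real.sqrt (x ^ 2 + Y₁) := Real.sqrt_pos.2 h1
    have hlt : Real.sqrt (x ^ 2 + Y₁) < Real.sqrt (x ^ 2 + Y₂) :=
      Real.sqrt_lt_sqrt h1.le (by linarith)
    have := tanh_ratio_anti hT hs₁ hlt
    rw [one_div_mul_eq_div, one_div_mul_eq_div]
    exact this
  apply intervalIntegral.integral_lt_integral_of_continuousOn_of_le_of_exists_lt hεω
    (hcont Y₂ (le_trans hY₁ (le_of_lt h12))) (hcont Y₁ hY₁)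
    (fun x hx => (hle x ⟨hx.1.le, hx.2⟩).le)
    ⟨ε, ⟨le_rfl, hεω.le⟩, hle ε ⟨le_rfl, hεω.le⟩⟩
end

section
/- At T = 0 (i.e., taking tanh factor equal to 1), the equation 1 = U₁ ∫_ε^{ħω_D} dξ/√(ξ² + Y) has the unique nonnegative solution Y = Δ², where Δ = √((ħω_D − ε e^{1/U₁})(ħω_D − ε e^{−1/U₁}))/sinh(1/U₁), provided ħω_D > ε e^{1/U₁}. -/
open Real

private lemma sqrt_aux {x Y : ℝ} (hY : 0 < Y) :
    Real.sqrt (1 + (x / Real.sqrt Y) ^ 2) = Real.sqrt (x ^ 2 + Y) / Real.sqrt Y := by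
  have hsY : 0 < Real.sqrt Y := Real.sqrt_pos.mpr hY
  rw [div_pow, Real.sq_sqrt hY.le,
    show (1 : ℝ) + x ^ 2 / Y = (x ^ 2 + Y) / Y by field_simp; ring,
    Real.sqrt_div (by positivity) Y]

private lemma integ {ε ω Y : ℝ} (hY : 0 < Y) :
    (∫ ξ in ε..ω, 1 / Real.sqrt (ξ ^ 2 + Y))
      = Real.arsinh (ω / Real.sqrt Y) - Real.arsinh (ε / Real.sqrt Y) := by
  have hsY : 0 < Real.sqrt Y := Real.sqrt_pos.mpr hY
  have hpos : ∀ x : ℝ, 0 < x ^ 2 + Y := fun x => by positivity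
  have key : ∀ x : ℝ, HasDerivAt (fun ξ => Real.arsinh (ξ / Real.sqrt Y))
      (1 / Real.sqrt (x ^ 2 + Y)) x := by
    intro x
    have h1 : HasDerivAt (fun ξ : ℝ => ξ / Real.sqrt Y) (1 / Real.sqrt Y) x := by
      simpa [one_div] using (hasDerivAt_id x).div_const (Real.sqrt Y)
    have h2 := (Real.hasDerivAt_arsinh (x / Real.sqrt Y)).comp x h1
    refine h2.congr_deriv ?_
    rw [sqrt_aux hY]
    have h3 : (0:ℝ) < Real.sqrt (x ^ 2 + Y) := Real.sqrt_pos.mpr (hpos x)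
    field_simp
  have hcont : Continuous fun x : ℝ => 1 / Real.sqrt (x ^ 2 + Y) := by
    apply continuous_const.div
    · exact (continuous_pow 2).add continuous_const |>.sqrt
    · exact fun x => (Real.sqrt_pos.mpr (hpos x)).ne'
  exact intervalIntegral.integral_eq_sub_of_hasDerivAt (fun x _ => key x)
    (hcont.intervalIntegrable ε ω)

private lemma sinh_add_arsinh {s ε Y : ℝ} (hY : 0 < Y) :
    Real.sinh (s + Real.arsinh (ε / Real.sqrt Y))
      = (Real.sinh s * Real.sqrt (ε ^ 2 + Y) + ε * Real.cosh s) / Real.sqrt Y := by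
  have hsY : 0 < Real.sqrt Y := Real.sqrt_pos.mpr hY
  rw [Real.sinh_add, Real.sinh_arsinh, Real.cosh_arsinh, sqrt_aux hY]
  field_simp

/-- At T = 0, the equation 1 = U₁ ∫_ε^{ħω_D} dξ/√(ξ² + Y) has the unique nonnegative
solution Y = Δ², where Δ = √((ħω_D − ε e^{1/U₁})(ħω_D − ε e^{−1/U₁}))/sinh(1/U₁),
provided ħω_D > ε e^{1/U₁}. -/
theorem stmt4 (U₁ ε ω : ℝ) (hU : 0 < U₁) (hε : 0 < ε) (hεω : ε < ω)
    (hω : ω > ε * Real.exp (1 / U₁)) :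
    ∀ Y : ℝ, (0 ≤ Y ∧ 1 = U₁ * ∫ ξ in ε..ω, 1 / Real.sqrt (ξ ^ 2 + Y)) ↔
      Y = (Real.sqrt ((ω - ε * Real.exp (1 / U₁)) * (ω - ε * Real.exp (-(1 / U₁)))) /
            Real.sinh (1 / U₁)) ^ 2 := by
  set s : ℝ := 1 / U₁ with hs_def
  have hs : 0 < s := by positivity
  have hsh : 0 < Real.sinh s := Real.sinh_pos_iff.mpr hs
  have hch : Real.cosh s < Real.exp s := by
    rw [Real.cosh_eq]
    have := Real.exp_lt_exp.mpr (neg_lt_self hs)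
    linarith
  have hch1 : ε * Real.cosh s < ω := lt_trans (by nlinarith) hω
  have hexplt : Real.exp (-s) < Real.exp s := Real.exp_lt_exp.mpr (by linarith)
  have hω2 : ε * Real.exp (-s) < ω := lt_trans (by nlinarith [Real.exp_pos (-s)]) hω
  have hP : 0 < (ω - ε * Real.exp s) * (ω - ε * Real.exp (-s)) := by
    apply mul_pos <;> linarith
  -- key algebraic identity
  have hid : (ω - ε * Real.cosh s) ^ 2 - ε ^ 2 * Real.sinh s ^ 2
      = (ω - ε * Real.exp s) * (ω - ε * Real.exp (-s)) := by
    have h1 := Real.cosh_sq_sub_sinh_sq s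
    have h2 : Real.exp s + Real.exp (-s) = 2 * Real.cosh s := by
      rw [Real.cosh_eq]; ring
    have h3 : Real.exp s * Real.exp (-s) = 1 := by
      rw [← Real.exp_add]; simp
    linear_combination ε ^ 2 * h1 - ε ^ 2 * h3 + ω * ε * h2
  intro Y
  constructor
  · rintro ⟨hY0, heq⟩
    rcases hY0.lt_or_eq with hY | hY
    · -- Y > 0
      rw [integ hY] at heq
      have hsY : 0 < Real.sqrt Y := Real.sqrt_pos.mpr hY
      have harsinh : Real.arsinh (ω / Real.sqrt Y) = s + Real.arsinh (ε / Real.sqrt Y) := by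
        have hU' : U₁ ≠ 0 := hU.ne'
        have h' : Real.arsinh (ω / Real.sqrt Y) - Real.arsinh (ε / Real.sqrt Y) = s := by
          rw [hs_def, eq_div_iff hU']; linear_combination -heq
        linarith
      have := congrArg Real.sinh harsinh
      rw [Real.sinh_arsinh, sinh_add_arsinh hY] at this
      have hω_eq : ω = Real.sinh s * Real.sqrt (ε ^ 2 + Y) + ε * Real.cosh s := by
        field_simp at this; linarith
      have hsq : ε ^ 2 + Y = ((ω - ε * Real.cosh s) / Real.sinh s) ^ 2 := by
        rw [show (ω - ε * Real.cosh s) / Real.sinh s = Real.sqrt (ε ^ 2 + Y) by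
          rw [hω_eq]; field_simp; ring]
        rw [Real.sq_sqrt (by positivity)]
      rw [div_pow, Real.sq_sqrt hP.le]
      rw [div_pow] at hsq
      field_simp at hsq ⊢
      nlinarith [hid, hsq]
    · -- Y = 0
      exfalso
      rw [← hY] at heq
      have hEq : (∫ ξ in ε..ω, 1 / Real.sqrt (ξ ^ 2 + 0)) = ∫ ξ in ε..ω, 1 / ξ := by
        apply intervalIntegral.integral_congr
        intro x hx
        rw [Set.uIcc_of_le hεω.le] at hx
        have hx0 : 0 < x := lt_of_lt_of_le hε hx.1
        show 1 / Real.sqrt (x ^ 2 + 0) = 1 / x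
        rw [add_zero, Real.sqrt_sq hx0.le]
      rw [hEq, integral_one_div (Set.notMem_uIcc_of_lt hε (hε.trans hεω))] at heq
      have hlog : Real.log (ω / ε) = s := by
        have hU' : U₁ ≠ 0 := hU.ne'
        rw [hs_def, eq_div_iff hU']; linear_combination -heq
      have : ω / ε = Real.exp s := by rw [← hlog, Real.exp_log (div_pos (hε.trans hεω) hε)]
      have : ω = ε * Real.exp s := by field_simp at this; linarith
      linarith
  · rintro rfl
    have hYval : (Real.sqrt ((ω - ε * Real.exp s) * (ω - ε * Real.exp (-s))) /
        Real.sinh s) ^ 2 = (ω - ε * Real.exp s) * (ω - ε * Real.exp (-s)) / Real.sinh s ^ 2 := by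
      rw [div_pow, Real.sq_sqrt hP.le]
    refine ⟨sq_nonneg _, ?_⟩
    rw [hYval]
    set Z : ℝ := (ω - ε * Real.exp s) * (ω - ε * Real.exp (-s)) / Real.sinh s ^ 2 with hZ_def
    have hZ : 0 < Z := by rw [hZ_def]; exact div_pos hP (pow_pos hsh 2)
    have hsZ : 0 < Real.sqrt Z := Real.sqrt_pos.mpr hZ
    have hsq : ε ^ 2 + Z = ((ω - ε * Real.cosh s) / Real.sinh s) ^ 2 := by
      rw [hZ_def, div_pow]
      field_simp
      linarith [hid]
    have hroot : Real.sqrt (ε ^ 2 + Z) = (ω - ε * Real.cosh s) / Real.sinh s := by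
      rw [hsq, Real.sqrt_sq (div_nonneg (by linarith) hsh.le)]
    have harsinh : Real.arsinh (ω / Real.sqrt Z) = s + Real.arsinh (ε / Real.sqrt Z) := by
      apply Real.sinh_injective
      rw [Real.sinh_arsinh, sinh_add_arsinh hZ, hroot]
      field_simp
      ring
    rw [integ hZ, harsinh]
    rw [hs_def]
    field_simp
    ring
end

section
/- If 0 < U₁ < U₂ and 0 < T < τ₂ with T < τ₁, then Δ₁(T) < Δ₂(T), where Δ_k(T) is the unique nonnegative solution of the simple gap equation with coupling U_k at temperature T (with Δ_k(T) = 0 for T ≥ τ_k). -/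
open Real Set

lemma sinh_le_self_mul_cosh {x : ℝ} (hx : 0 ≤ x) : Real.sinh x ≤ x * Real.cosh x := by
  have h : MonotoneOn (fun x : ℝ => x * Real.cosh x - Real.sinh x) (Ici 0) := by
    apply monotoneOn_of_deriv_nonneg (convex_Ici 0)
    · exact ((continuous_id.mul Real.continuous_cosh).sub Real.continuous_sinh).continuousOn
    · intro y hy
      exact (((differentiable_id.mul Real.differentiable_cosh).sub
        Real.differentiable_sinh) y).differentiableWithinAt
    · intro y hy
      rw [interior_Ici, mem_Ioi] at hy
      have hd : HasDerivAt (fun x : ℝ => x * Real.cosh x - Real.sinh x)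
          (1 * Real.cosh y + y * Real.sinh y - Real.cosh y) y :=
        ((hasDerivAt_id y).mul (Real.hasDerivAt_cosh y)).sub (Real.hasDerivAt_sinh y)
      rw [hd.deriv]
      have : (0:ℝ) ≤ Real.sinh y := Real.sinh_nonneg_iff.mpr hy.le
      nlinarith
  have := h (self_mem_Ici) (mem_Ici.2 hx) hx
  simpa using this

lemma sinh_div_mono {u v : ℝ} (hu : 0 ≤ u) (huv : u ≤ v) :
    v * Real.sinh u ≤ u * Real.sinh v := by
  rcases eq_or_lt_of_le hu with h0 | h0
  · simp [← h0]
  have hv : 0 < v := lt_of_lt_of_le h0 huv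
  have hmono : MonotoneOn (fun x : ℝ => Real.sinh x / x) (Ioi 0) := by
    apply monotoneOn_of_deriv_nonneg (convex_Ioi 0)
    · exact ContinuousOn.div Real.continuous_sinh.continuousOn continuousOn_id
        (fun x hx => ne_of_gt hx)
    · intro y hy
      rw [interior_Ioi, mem_Ioi] at hy
      exact ((Real.differentiable_sinh y).div (differentiable_id y)
        (ne_of_gt hy)).differentiableWithinAt
    · intro y hy
      rw [interior_Ioi, mem_Ioi] at hy
      have hd : HasDerivAt (fun x : ℝ => Real.sinh x / x)
          ((Real.cosh y * y - Real.sinh y * 1) / y ^ 2) y :=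
        (Real.hasDerivAt_sinh y).div (hasDerivAt_id y) (ne_of_gt hy)
      rw [hd.deriv]
      apply div_nonneg _ (sq_nonneg y)
      have := sinh_le_self_mul_cosh hy.le
      nlinarith
  have := hmono (mem_Ioi.2 h0) (mem_Ioi.2 hv) huv
  rw [div_le_div_iff₀ h0 hv] at this
  linarith

lemma tanh_div_anti {a b : ℝ} (ha : 0 < a) (hab : a ≤ b) :
    Real.tanh b / b ≤ Real.tanh a / a := by
  have hb : 0 < b := lt_of_lt_of_le ha hab
  rw [div_le_div_iff₀ hb ha, Real.tanh_eq_sinh_div_cosh, Real.tanh_eq_sinh_div_cosh,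
    div_mul_eq_mul_div, div_mul_eq_mul_div,
    div_le_div_iff₀ (Real.cosh_pos _) (Real.cosh_pos _)]
  have key := sinh_div_mono (u := b - a) (v := a + b) (by linarith) (by linarith)
  have hS := Real.sinh_add a b
  have hD := Real.sinh_sub b a
  nlinarith [key, hS, hD]

-- pointwise form
lemma tanh_pointwise {T x y : ℝ} (hT : 0 < T) (hx : 0 < x) (hxy : x ≤ y) :
    (1 / y) * Real.tanh (y / (2 * T)) ≤ (1 / x) * Real.tanh (x / (2 * T)) := by
  have h2T : 0 < 2 * T := by linarith
  have hy : 0 < y := lt_of_lt_of_le hx hxy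
  have := tanh_div_anti (a := x / (2 * T)) (b := y / (2 * T))
    (div_pos hx h2T) (by gcongr)
  have e1 : Real.tanh (y/(2*T)) / (y/(2*T)) = (2*T) * ((1/y) * Real.tanh (y/(2*T))) := by
    field_simp
  have e2 : Real.tanh (x/(2*T)) / (x/(2*T)) = (2*T) * ((1/x) * Real.tanh (x/(2*T))) := by
    field_simp
  rw [e1, e2] at this
  exact le_of_mul_le_mul_left this h2T


/-- If 0 < U₁ < U₂ and 0 < T < τ₂ with T < τ₁, then Δ₁(T) < Δ₂(T), where Δ_k(T) is the
unique nonnegative solution of the simple gap equation with coupling U_k at temperature T. -/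
theorem stmt9 (U₁ U₂ ε ω τ₁ τ₂ : ℝ) (hε : 0 < ε) (hεω : ε < ω)
    (hU₁ : 0 < U₁) (hU : U₁ < U₂)
    (hτ₁pos : 0 < τ₁) (hτ₂pos : 0 < τ₂)
    (hτ₁ : 1 = U₁ * ∫ ξ in ε..ω, (1 / ξ) * Real.tanh (ξ / (2 * τ₁)))
    (hτ₂ : 1 = U₂ * ∫ ξ in ε..ω, (1 / ξ) * Real.tanh (ξ / (2 * τ₂)))
    (T Δ₁ Δ₂ : ℝ) (hT : 0 < T) (hTτ₂ : T < τ₂) (hTτ₁ : T < τ₁)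
    (hΔ₁ : 0 ≤ Δ₁)
    (hΔ₁eq : 1 = U₁ * ∫ ξ in ε..ω,
      (1 / Real.sqrt (ξ ^ 2 + Δ₁ ^ 2)) * Real.tanh (Real.sqrt (ξ ^ 2 + Δ₁ ^ 2) / (2 * T)))
    (hΔ₂ : 0 ≤ Δ₂)
    (hΔ₂eq : 1 = U₂ * ∫ ξ in ε..ω,
      (1 / Real.sqrt (ξ ^ 2 + Δ₂ ^ 2)) * Real.tanh (Real.sqrt (ξ ^ 2 + Δ₂ ^ 2) / (2 * T))) :
    Δ₁ < Δ₂ := by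
  by_contra hcon
  push_neg at hcon
  have hU₂ : 0 < U₂ := hU₁.trans hU
  -- continuity / integrability for arbitrary Δ
  have hcont : ∀ Δ : ℝ, ContinuousOn (fun ξ : ℝ =>
      (1 / Real.sqrt (ξ ^ 2 + Δ ^ 2)) * Real.tanh (Real.sqrt (ξ ^ 2 + Δ ^ 2) / (2 * T)))
      (Set.Icc ε ω) := by
    intro Δ
    have hs : ContinuousOn (fun ξ : ℝ => Real.sqrt (ξ ^ 2 + Δ ^ 2)) (Set.Icc ε ω) :=
      (Real.continuous_sqrt.comp ((continuous_pow 2).add continuous_const)).continuousOn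
    have hne : ∀ ξ ∈ Set.Icc ε ω, Real.sqrt (ξ ^ 2 + Δ ^ 2) ≠ 0 := by
      intro ξ hξ
      have hξpos : 0 < ξ := lt_of_lt_of_le hε hξ.1
      have : 0 < ξ ^ 2 + Δ ^ 2 :=
        lt_of_lt_of_le (pow_pos hξpos 2) (le_add_of_nonneg_right (sq_nonneg _))
      exact ne_of_gt (Real.sqrt_pos.mpr this)
    exact (continuousOn_const.div hs hne).mul
      (continuous_tanh'.comp_continuousOn (hs.div_const _))
  have hint : ∀ Δ : ℝ, IntervalIntegrable (fun ξ : ℝ =>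
      (1 / Real.sqrt (ξ ^ 2 + Δ ^ 2)) * Real.tanh (Real.sqrt (ξ ^ 2 + Δ ^ 2) / (2 * T)))
      MeasureTheory.volume ε ω := by
    intro Δ
    apply ContinuousOn.intervalIntegrable
    rw [Set.uIcc_of_le hεω.le]; exact hcont Δ
  have key : (∫ ξ in ε..ω,
      (1 / Real.sqrt (ξ ^ 2 + Δ₁ ^ 2)) * Real.tanh (Real.sqrt (ξ ^ 2 + Δ₁ ^ 2) / (2 * T))) ≤
      ∫ ξ in ε..ω,
      (1 / Real.sqrt (ξ ^ 2 + Δ₂ ^ 2)) * Real.tanh (Real.sqrt (ξ ^ 2 + Δ₂ ^ 2) / (2 * T)) := by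
    apply intervalIntegral.integral_mono_on hεω.le (hint Δ₁) (hint Δ₂)
    intro ξ hξ
    have hξpos : 0 < ξ := lt_of_lt_of_le hε hξ.1
    have hx : 0 < Real.sqrt (ξ ^ 2 + Δ₂ ^ 2) :=
      Real.sqrt_pos.mpr (lt_of_lt_of_le (pow_pos hξpos 2) (le_add_of_nonneg_right (sq_nonneg _)))
    have hxy : Real.sqrt (ξ ^ 2 + Δ₂ ^ 2) ≤ Real.sqrt (ξ ^ 2 + Δ₁ ^ 2) :=
      Real.sqrt_le_sqrt (by nlinarith)
    exact tanh_pointwise hT hx hxy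
  have e₁ : (1 : ℝ) / U₁ = ∫ ξ in ε..ω,
      (1 / Real.sqrt (ξ ^ 2 + Δ₁ ^ 2)) * Real.tanh (Real.sqrt (ξ ^ 2 + Δ₁ ^ 2) / (2 * T)) := by
    rw [div_eq_iff hU₁.ne', mul_comm]; exact hΔ₁eq
  have e₂ : (1 : ℝ) / U₂ = ∫ ξ in ε..ω,
      (1 / Real.sqrt (ξ ^ 2 + Δ₂ ^ 2)) * Real.tanh (Real.sqrt (ξ ^ 2 + Δ₂ ^ 2) / (2 * T)) := by
    rw [div_eq_iff hU₂.ne', mul_comm]; exact hΔ₂eq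
  have : (1 : ℝ) / U₂ < 1 / U₁ := one_div_lt_one_div_of_lt hU₁ hU
  rw [e₁, e₂] at this
  linarith
end

section
/- At T = 0, if 0 < U₁ < U₂ and ħω_D > ε e^{1/U₁}, then Δ₁(0) < Δ₂(0), where Δ_k(0) = √((ħω_D − ε e^{1/U_k})(ħω_D − ε e^{−1/U_k}))/sinh(1/U_k). -/
private lemma stmt10_aux (A B cx cy : ℝ) (hB : 0 < B) (hcy : 1 < cy)
    (hcyx : cy < cx) (hBA : B * cx < A) :
    (A - B * cx) * (cy ^ 2 - 1) < (A - B * cy) * (cx ^ 2 - 1) := by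
  have hcx : 1 < cx := hcy.trans hcyx
  have h1 : 0 < (A - B * cx) * cy := mul_pos (by linarith) (by linarith)
  have hA : 0 < A := lt_trans (mul_pos hB (lt_trans one_pos hcx)) hBA
  have h2 : 0 < A * cx - B := by
    nlinarith [mul_pos hA (sub_pos.2 hcx), mul_pos hB (sub_pos.2 hcx)]
  have key : 0 < (cx - cy) * (A * cx + A * cy - B * (cx * cy) - B) := by
    apply mul_pos (by linarith)
    nlinarith
  nlinarith [key]

/-- At T = 0, if 0 < U₁ < U₂ and ħω_D > ε e^{1/U₁}, then Δ₁(0) < Δ₂(0). -/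
theorem stmt10 (U₁ U₂ ε ω : ℝ) (hε : 0 < ε) (hεω : ε < ω)
    (hU₁ : 0 < U₁) (hU : U₁ < U₂) (hω : ω > ε * Real.exp (1 / U₁)) :
    Real.sqrt ((ω - ε * Real.exp (1 / U₁)) * (ω - ε * Real.exp (-(1 / U₁)))) /
        Real.sinh (1 / U₁) <
      Real.sqrt ((ω - ε * Real.exp (1 / U₂)) * (ω - ε * Real.exp (-(1 / U₂)))) /
        Real.sinh (1 / U₂) := by
  have hU₂ : 0 < U₂ := hU₁.trans hU
  set x := 1 / U₁ with hxdef
  set y := 1 / U₂ with hydef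
  have hx : 0 < x := by positivity
  have hy : 0 < y := by positivity
  have hyx : y < x := one_div_lt_one_div_of_lt hU₁ hU
  have scx := Real.sinh_pos_iff.2 hx
  have scy := Real.sinh_pos_iff.2 hy
  have hcx1 : 1 < Real.cosh x := by
    nlinarith [Real.cosh_sq x, Real.cosh_pos (x := x)]
  have hcy1 : 1 < Real.cosh y := by
    nlinarith [Real.cosh_sq y, Real.cosh_pos (x := y)]
  have hcyx : Real.cosh y < Real.cosh x := by
    rw [Real.cosh_lt_cosh, abs_of_pos hy, abs_of_pos hx]; exact hyx
  have hNx : (ω - ε * Real.exp x) * (ω - ε * Real.exp (-x))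
      = ω ^ 2 + ε ^ 2 - 2 * ε * ω * Real.cosh x := by
    rw [Real.cosh_eq, Real.exp_neg]
    have h := (Real.exp_pos x).ne'
    field_simp
    ring
  have hNy : (ω - ε * Real.exp y) * (ω - ε * Real.exp (-y))
      = ω ^ 2 + ε ^ 2 - 2 * ε * ω * Real.cosh y := by
    rw [Real.cosh_eq, Real.exp_neg]
    have h := (Real.exp_pos y).ne'
    field_simp
    ring
  -- positivity of numerators
  have hωx : ε * Real.exp x < ω := hω
  have hωy : ε * Real.exp y < ω := by
    have : Real.exp y < Real.exp x := Real.exp_lt_exp.2 hyx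
    nlinarith
  have hnegx : ε * Real.exp (-x) < ω := by
    have : Real.exp (-x) < 1 := Real.exp_lt_one_iff.2 (by linarith)
    nlinarith
  have hnegy : ε * Real.exp (-y) < ω := by
    have : Real.exp (-y) < 1 := Real.exp_lt_one_iff.2 (by linarith)
    nlinarith
  have hNxpos : 0 < (ω - ε * Real.exp x) * (ω - ε * Real.exp (-x)) := by
    apply mul_pos <;> linarith
  have hNypos : 0 < (ω - ε * Real.exp y) * (ω - ε * Real.exp (-y)) := by
    apply mul_pos <;> linarith
  -- B * cosh x < A
  have hBA : 2 * ε * ω * Real.cosh x < ω ^ 2 + ε ^ 2 := by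
    nlinarith [hNxpos, hNx]
  -- key inequality on N / sinh^2
  have hsq : (ω - ε * Real.exp x) * (ω - ε * Real.exp (-x)) / Real.sinh x ^ 2
      < (ω - ε * Real.exp y) * (ω - ε * Real.exp (-y)) / Real.sinh y ^ 2 := by
    rw [div_lt_div_iff₀ (by positivity) (by positivity), hNx, hNy,
      Real.sinh_sq, Real.sinh_sq]
    exact stmt10_aux _ _ _ _ (mul_pos (mul_pos two_pos hε) (hε.trans hεω)) hcy1 hcyx hBA
  calc Real.sqrt ((ω - ε * Real.exp x) * (ω - ε * Real.exp (-x))) / Real.sinh x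
      = Real.sqrt ((ω - ε * Real.exp x) * (ω - ε * Real.exp (-x)) / Real.sinh x ^ 2) := by
        rw [Real.sqrt_div hNxpos.le, Real.sqrt_sq scx.le]
    _ < Real.sqrt ((ω - ε * Real.exp y) * (ω - ε * Real.exp (-y)) / Real.sinh y ^ 2) :=
        Real.sqrt_lt_sqrt (by positivity) hsq
    _ = Real.sqrt ((ω - ε * Real.exp y) * (ω - ε * Real.exp (-y))) / Real.sinh y := by
        rw [Real.sqrt_div hNypos.le, Real.sqrt_sq scy.le]
end

section
/- Define T_c = inf{T > 0 : u₀(T, x) = 0 for all x ∈ [ε, ħω_D]}, where u₀(T, ·) ∈ V_T is the solution of the BCS gap equation at temperature T. Then τ₁ ≤ T_c ≤ τ₂. -/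
/-- T_c = inf{T > 0 : u₀(T, x) = 0 for all x ∈ [ε, ħω_D]} satisfies τ₁ ≤ T_c ≤ τ₂. -/
theorem stmt17 (ε ω τ₁ τ₂ : ℝ) (hε : 0 < ε) (hεω : ε < ω)
    (hτ₁pos : 0 < τ₁) (hτ₁₂ : τ₁ ≤ τ₂)
    (Δ₁ Δ₂ : ℝ → ℝ) (u₀ : ℝ → ℝ → ℝ)
    (hΔ₁nonneg : ∀ T, 0 ≤ Δ₁ T)
    (hΔ₁zero : ∀ T, Δ₁ T = 0 ↔ τ₁ ≤ T)
    (hΔ₂nonneg : ∀ T, 0 ≤ Δ₂ T)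
    (hΔ₂zero : ∀ T, Δ₂ T = 0 ↔ τ₂ ≤ T)
    (hbd : ∀ T, 0 ≤ T → T ≤ τ₂ → ∀ x ∈ Set.Icc ε ω,
      Δ₁ T ≤ u₀ T x ∧ u₀ T x ≤ Δ₂ T)
    (hzero : ∀ T, τ₂ < T → ∀ x ∈ Set.Icc ε ω, u₀ T x = 0) :
    τ₁ ≤ sInf {T : ℝ | 0 < T ∧ ∀ x ∈ Set.Icc ε ω, u₀ T x = 0} ∧
    sInf {T : ℝ | 0 < T ∧ ∀ x ∈ Set.Icc ε ω, u₀ T x = 0} ≤ τ₂ := by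
  set S := {T : ℝ | 0 < T ∧ ∀ x ∈ Set.Icc ε ω, u₀ T x = 0} with hS
  have hτ₂pos : 0 < τ₂ := lt_of_lt_of_le hτ₁pos hτ₁₂
  have hmem : ∀ T, τ₂ < T → T ∈ S := fun T hT =>
    ⟨lt_trans hτ₂pos hT, hzero T hT⟩
  have hne : S.Nonempty := ⟨τ₂ + 1, hmem _ (by linarith)⟩
  have hlb : ∀ T ∈ S, τ₁ ≤ T := by
    intro T hT
    rcases le_or_gt T τ₂ with h | h
    · have hbd' := hbd T (le_of_lt hT.1) h
      have hx : ε ∈ Set.Icc ε ω := ⟨le_refl ε, le_of_lt hεω⟩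
      have h1 : Δ₁ T ≤ u₀ T ε := (hbd' ε hx).1
      have h2 : u₀ T ε = 0 := hT.2 ε hx
      have : Δ₁ T = 0 := le_antisymm (by linarith) (hΔ₁nonneg T)
      exact (hΔ₁zero T).mp this
    · linarith
  have hbdd : BddBelow S := ⟨τ₁, hlb⟩
  constructor
  · exact le_csInf hne hlb
  · refine le_of_forall_pos_le_add fun δ hδ => ?_
    exact csInf_le hbdd (hmem _ (by linarith))
end
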